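/- If G is a 2-connected graph of order n and d(u)+d(v) ≥ n+1 for every pair of distinct nonadjacent vertices u and v, then G is Hamilton-connected (every two vertices of G are connected by a Hamiltonian path). -/

import Mathlib

open Classical SimpleGraph

noncomputable section

/-- Degree of a vertex (via `Set.ncard`, avoiding decidability assumptions). -/
noncomputable def gdeg {V : Type*} (G : SimpleGraph V) (v : V) : ℕ :=
  (G.neighborSet v).ncard

/-- A graph is Hamilton-connected if every two distinct vertices are joined by a
Hamiltonian path. -/
def HamConnected {V : Type*} (G : SimpleGraph V) : Prop :=
  ∀ u v : V, u ≠ v → ∃ p : G.Walk u v, p.IsHamiltonian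

/-- `G` is 2-connected: at least 3 vertices and deleting any vertex leaves a connected graph. -/
def TwoConnected {V : Type*} [Fintype V] (G : SimpleGraph V) : Prop :=
  3 ≤ Fintype.card V ∧ ∀ v : V, (G.induce {w : V | w ≠ v}).Connected

section Aux
variable {V : Type*}



/-- Add the edge `uv` to `G`. -/
def addE (G : SimpleGraph V) (u v : V) : SimpleGraph V where
  Adj x y := x ≠ y ∧ (G.Adj x y ∨ (x = u ∧ y = v) ∨ (x = v ∧ y = u))
  symm := by
    refine ⟨?_⟩
    intro x y h
    refine ⟨Ne.symm h.1, ?_⟩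
    rcases h.2 with h | h | h
    · exact Or.inl h.symm
    · exact Or.inr (Or.inr ⟨h.2, h.1⟩)
    · exact Or.inr (Or.inl ⟨h.2, h.1⟩)
  loopless := ⟨fun x h => h.1 rfl⟩

lemma addE_comm (G : SimpleGraph V) (u v : V) : addE G u v = addE G v u := by
  ext x y; simp only [addE]; tauto

lemma adj_addE (G : SimpleGraph V) (u v : V) {x y : V} (h : G.Adj x y) :
    (addE G u v).Adj x y := ⟨G.ne_of_adj h, Or.inl h⟩

/-- Segment-reversal surgery on a Hamiltonian-path-like function. -/
lemma surgery (G : SimpleGraph V) (n : ℕ) (x : ℕ → V) (p q : ℕ)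
    (hpq : p + 2 ≤ q) (hq : q + 1 < n)
    (hinj : ∀ k l, k < n → l < n → x k = x l → k = l)
    (hsurj : ∀ w, ∃ k, k < n ∧ x k = w)
    (H1 : ∀ k, k + 1 < n → k ≠ p → k ≠ q → G.Adj (x k) (x (k+1)))
    (H2 : G.Adj (x p) (x q)) (H3 : G.Adj (x (p+1)) (x (q+1))) :
    ∃ y : ℕ → V, y 0 = x 0 ∧ y (n-1) = x (n-1) ∧
      (∀ k, k + 1 < n → G.Adj (y k) (y (k+1))) ∧
      (∀ k l, k < n → l < n → y k = y l → k = l) ∧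
      (∀ w, ∃ k, k < n ∧ y k = w) := by
  set σ : ℕ → ℕ := fun k => if k ≤ p then k else if k ≤ q then q + p + 1 - k else k with hσ
  have hσval : ∀ k, σ k = if k ≤ p then k else if k ≤ q then q + p + 1 - k else k :=
    fun k => rfl
  have hσlt : ∀ k, k < n → σ k < n := by
    intro k hk; rw [hσval]; split_ifs <;> omega
  have hσinj : ∀ k l, σ k = σ l → k = l := by
    intro k l h; rw [hσval, hσval] at h; split_ifs at h <;> omega
  refine ⟨fun k => x (σ k), ?_, ?_, ?_, ?_, ?_⟩
  · show x (σ 0) = x 0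
    have : σ 0 = 0 := by rw [hσval]; split_ifs <;> omega
    rw [this]
  · show x (σ (n-1)) = x (n-1)
    have : σ (n-1) = n - 1 := by rw [hσval]; split_ifs <;> omega
    rw [this]
  · intro k hk
    show G.Adj (x (σ k)) (x (σ (k+1)))
    rcases lt_trichotomy k p with h | h | h
    · have e1 : σ k = k := by rw [hσval]; split_ifs <;> omega
      have e2 : σ (k+1) = k + 1 := by rw [hσval]; split_ifs <;> omega
      rw [e1, e2]; exact H1 k hk (by omega) (by omega)
    · have e1 : σ k = p := by rw [hσval]; split_ifs <;> omega
      have e2 : σ (k+1) = q := by rw [hσval]; split_ifs <;> omega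
      rw [e1, e2]; exact H2
    · rcases lt_trichotomy k q with h' | h' | h'
      · -- p < k < q : middle, reversed
        have e1 : σ k = (q + p - k) + 1 := by rw [hσval]; split_ifs <;> omega
        have e2 : σ (k+1) = q + p - k := by rw [hσval]; split_ifs <;> omega
        rw [e1, e2]
        exact (H1 (q + p - k) (by omega) (by omega) (by omega)).symm
      · have e1 : σ k = p + 1 := by rw [hσval]; split_ifs <;> omega
        have e2 : σ (k+1) = q + 1 := by rw [hσval]; split_ifs <;> omega
        rw [e1, e2]; exact H3
      · have e1 : σ k = k := by rw [hσval]; split_ifs <;> omega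
        have e2 : σ (k+1) = k + 1 := by rw [hσval]; split_ifs <;> omega
        rw [e1, e2]; exact H1 k hk (by omega) (by omega)
  · intro k l hk hl h
    exact hσinj k l (hinj _ _ (hσlt k hk) (hσlt l hl) h)

  · intro w
    obtain ⟨k, hk, hxk⟩ := hsurj w
    have : ∃ m, m < n ∧ σ m = k := by
      by_cases h1 : k ≤ p
      · exact ⟨k, hk, by rw [hσval]; split_ifs <;> omega⟩
      · by_cases h2 : k ≤ q
        · exact ⟨q + p + 1 - k, by omega, by rw [hσval]; split_ifs <;> omega⟩
        · exact ⟨k, hk, by rw [hσval]; split_ifs <;> omega⟩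
    obtain ⟨m, hm, hσm⟩ := this
    exact ⟨m, hm, by show x (σ m) = w; rw [hσm, hxk]⟩

lemma gdeg_eq (G : SimpleGraph V) [Fintype V] (u : V) :
    gdeg G u = (Finset.univ.filter (fun w => G.Adj u w)).card := by
  rw [gdeg, ← Set.ncard_coe_finset]
  congr 1
  ext w
  simp [SimpleGraph.neighborSet]

lemma closure_aux [Fintype V] (G : SimpleGraph V) (u v : V)
    (hna : ¬ G.Adj u v)
    (hd : Fintype.card V + 1 ≤ gdeg G u + gdeg G v)
    (x : ℕ → V) (i : ℕ) (hi : i + 1 < Fintype.card V)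
    (hxi : x i = u) (hxi1 : x (i+1) = v)
    (hadj : ∀ k, k + 1 < Fintype.card V → (addE G u v).Adj (x k) (x (k+1)))
    (hinj : ∀ k l, k < Fintype.card V → l < Fintype.card V → x k = x l → k = l)
    (hsurj : ∀ w, ∃ k, k < Fintype.card V ∧ x k = w) :
    ∃ y : ℕ → V, y 0 = x 0 ∧ y (Fintype.card V - 1) = x (Fintype.card V - 1) ∧
      (∀ k, k + 1 < Fintype.card V → G.Adj (y k) (y (k+1))) ∧
      (∀ k l, k < Fintype.card V → l < Fintype.card V → y k = y l → k = l) ∧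
      (∀ w, ∃ k, k < Fintype.card V ∧ y k = w) := by
  set n := Fintype.card V with hn
  -- all non-i consecutive pairs are G-edges
  have honly : ∀ k, k + 1 < n → k ≠ i → G.Adj (x k) (x (k+1)) := by
    intro k hk hki
    rcases (hadj k hk).2 with h | ⟨h1, h2⟩ | ⟨h1, h2⟩
    · exact h
    · exact absurd (hinj k i (by omega) (by omega) (by rw [h1, hxi])) hki
    · have e1 : k + 1 = i := hinj (k+1) i (by omega) (by omega) (by rw [h2, hxi])
      have e2 : k = i + 1 := hinj k (i+1) (by omega) (by omega) (by rw [h1, hxi1])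
      omega
  -- position function
  set pos : V → ℕ := fun w => (hsurj w).choose with hposdef
  have hpos : ∀ w : V, x (pos w) = w := fun w => (hsurj w).choose_spec.2
  have hposlt : ∀ w : V, pos w < n := fun w => (hsurj w).choose_spec.1
  have hposinj : Function.Injective pos := by
    intro w w' h
    rw [← hpos w, ← hpos w']
    show x (pos w) = x (pos w'); rw [h]
  set S : Finset ℕ := ((Finset.range (n-1)).erase i).filter (fun k => G.Adj u (x k)) with hS
  set T : Finset ℕ := ((Finset.range (n-1)).erase i).filter
      (fun k => G.Adj v (x (k+1))) with hT
  have hcardS : gdeg G u ≤ S.card + 1 := by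
    rw [gdeg_eq]
    have hsub : (Finset.univ.filter (fun w => G.Adj u w)).image pos ⊆ insert (n-1) S := by
      intro k hk
      simp only [Finset.mem_image, Finset.mem_filter, Finset.mem_univ, true_and] at hk
      obtain ⟨w, hw, rfl⟩ := hk
      by_cases hk1 : pos w = n - 1
      · simp [hk1]
      · have hki : pos w ≠ i := by
          intro h
          have : x (pos w) = x i := by rw [h]
          rw [hpos, hxi] at this
          exact G.ne_of_adj hw this.symm
        refine Finset.mem_insert_of_mem ?_
        rw [hS]
        refine Finset.mem_filter.2 ⟨Finset.mem_erase.2 ⟨hki, Finset.mem_range.2 (by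
          have := hposlt w; omega)⟩, ?_⟩
        rw [hpos]; exact hw
    calc (Finset.univ.filter (fun w => G.Adj u w)).card
        = ((Finset.univ.filter (fun w => G.Adj u w)).image pos).card :=
          (Finset.card_image_of_injective _ hposinj).symm
      _ ≤ (insert (n-1) S).card := Finset.card_le_card hsub
      _ ≤ S.card + 1 := Finset.card_insert_le _ _
  have hcardT : gdeg G v ≤ T.card + 1 := by
    rw [gdeg_eq]
    have hsub : (Finset.univ.filter (fun w => G.Adj v w)).image pos ⊆
        insert 0 (T.image (· + 1)) := by
      intro k hk
      simp only [Finset.mem_image, Finset.mem_filter, Finset.mem_univ, true_and] at hk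
      obtain ⟨w, hw, rfl⟩ := hk
      by_cases hk0 : pos w = 0
      · simp [hk0]
      · refine Finset.mem_insert_of_mem ?_
        refine Finset.mem_image.2 ⟨pos w - 1, ?_, by omega⟩
        have hkv : x (pos w - 1 + 1) = w := by
          have : pos w - 1 + 1 = pos w := by omega
          rw [this, hpos]
        have hki : pos w - 1 ≠ i := by
          intro h
          have : pos w = i + 1 := by omega
          have : x (pos w) = x (i+1) := by rw [this]
          rw [hpos, hxi1] at this
          exact G.ne_of_adj hw this.symm
        rw [hT]
        refine Finset.mem_filter.2 ⟨Finset.mem_erase.2 ⟨hki, Finset.mem_range.2 (by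
          have := hposlt w; omega)⟩, by rw [hkv]; exact hw⟩
    calc (Finset.univ.filter (fun w => G.Adj v w)).card
        = ((Finset.univ.filter (fun w => G.Adj v w)).image pos).card :=
          (Finset.card_image_of_injective _ hposinj).symm
      _ ≤ (insert 0 (T.image (· + 1))).card := Finset.card_le_card hsub
      _ ≤ (T.image (· + 1)).card + 1 := Finset.card_insert_le _ _
      _ = T.card + 1 := by
          rw [Finset.card_image_of_injective _ (add_left_injective 1)]
  -- S and T must intersect
  have hDcard : ((Finset.range (n-1)).erase i).card = n - 2 := by
    rw [Finset.card_erase_of_mem (Finset.mem_range.2 (by omega)), Finset.card_range]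
    omega
  obtain ⟨j, hjS, hjT⟩ : ∃ j, j ∈ S ∧ j ∈ T := by
    by_contra hcon
    push_neg at hcon
    have hdisj : Disjoint S T := Finset.disjoint_left.2 (fun {a} ha => hcon a ha)
    have hsubS : S ⊆ (Finset.range (n-1)).erase i := Finset.filter_subset _ _
    have hsubT : T ⊆ (Finset.range (n-1)).erase i := Finset.filter_subset _ _
    have : S.card + T.card ≤ n - 2 := by
      rw [← Finset.card_union_of_disjoint hdisj, ← hDcard]
      exact Finset.card_le_card (Finset.union_subset hsubS hsubT)
    omega
  rw [hS, Finset.mem_filter, Finset.mem_erase, Finset.mem_range] at hjS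
  rw [hT, Finset.mem_filter, Finset.mem_erase, Finset.mem_range] at hjT
  obtain ⟨⟨hji, hjlt⟩, hju⟩ := hjS
  obtain ⟨-, hjv⟩ := hjT
  have hji1 : j ≠ i + 1 := by
    intro h; rw [h, hxi1] at hju; exact hna hju
  have hj1i : j + 1 ≠ i := by
    intro h; rw [h, hxi] at hjv; exact hna hjv.symm
  rcases lt_or_gt_of_ne hji with hlt | hgt
  · -- j < i : p = j, q = i
    obtain ⟨y, h0, h1, h2, h3, h4⟩ := surgery G n x j i (by omega) (by omega) hinj hsurj
      (fun k hk hkj hki => honly k hk hki)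
      (by rw [hxi]; exact hju.symm) (by rw [hxi1]; exact hjv.symm)
    exact ⟨y, h0, h1, h2, h3, h4⟩
  · -- i < j : p = i, q = j
    obtain ⟨y, h0, h1, h2, h3, h4⟩ := surgery G n x i j (by omega) (by omega) hinj hsurj
      (fun k hk hki hkj => honly k hk hki)
      (by rw [hxi]; exact hju) (by rw [hxi1]; exact hjv)
    exact ⟨y, h0, h1, h2, h3, h4⟩
def IsHP [Fintype V] (G : SimpleGraph V) (a b : V) (x : ℕ → V) : Prop :=
  x 0 = a ∧ x (Fintype.card V - 1) = b ∧
  (∀ k, k + 1 < Fintype.card V → G.Adj (x k) (x (k+1))) ∧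
  (∀ k l, k < Fintype.card V → l < Fintype.card V → x k = x l → k = l) ∧
  (∀ w : V, ∃ k, k < Fintype.card V ∧ x k = w)

lemma closureE [Fintype V] (G : SimpleGraph V) (u v : V) (huv : u ≠ v)
    (hna : ¬ G.Adj u v)
    (hd : Fintype.card V + 1 ≤ gdeg G u + gdeg G v)
    (a b : V) (x : ℕ → V) (hx : IsHP (addE G u v) a b x) :
    ∃ y, IsHP G a b y := by
  obtain ⟨h0, h1, hadj, hinj, hsurj⟩ := hx
  set n := Fintype.card V with hn
  by_cases hall : ∀ k, k + 1 < n → G.Adj (x k) (x (k+1))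
  · exact ⟨x, h0, h1, hall, hinj, hsurj⟩
  · push_neg at hall
    obtain ⟨i, hi, hbad⟩ := hall
    rcases (hadj i hi).2 with h | ⟨e1, e2⟩ | ⟨e1, e2⟩
    · exact absurd h hbad
    · obtain ⟨y, g0, g1, g2, g3, g4⟩ :=
        closure_aux G u v hna hd x i hi e1 e2 hadj hinj hsurj
      exact ⟨y, by rw [g0, h0], by rw [g1, h1], g2, g3, g4⟩
    · obtain ⟨y, g0, g1, g2, g3, g4⟩ :=
        closure_aux G v u (fun h => hna h.symm) (by omega) x i hi e1 e2
          (by rw [← addE_comm]; exact hadj) hinj hsurj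
      exact ⟨y, by rw [g0, h0], by rw [g1, h1], g2, g3, g4⟩

lemma complete_case [Fintype V] (G : SimpleGraph V)
    (hc : ∀ u v : V, u ≠ v → G.Adj u v) (a b : V) (hab : a ≠ b) :
    ∃ x, IsHP G a b x := by
  set n := Fintype.card V with hn
  have hn2 : 2 ≤ n := Fintype.one_lt_card_iff_nontrivial.2 ⟨a, b, hab⟩
  have h0n : 0 < n := by omega
  have h1n : n - 1 < n := by omega
  let e : Fin n ≃ V := (Fintype.equivFinOfCardEq rfl).symm
  let e1 : Fin n ≃ V := e.trans (Equiv.swap (e ⟨0, h0n⟩) a)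
  have he1 : e1 ⟨0, h0n⟩ = a := by
    show Equiv.swap (e ⟨0, h0n⟩) a (e ⟨0, h0n⟩) = a
    exact Equiv.swap_apply_left _ _
  let e2 : Fin n ≃ V := e1.trans (Equiv.swap (e1 ⟨n-1, h1n⟩) b)
  have he2b : e2 ⟨n-1, h1n⟩ = b := by
    show Equiv.swap (e1 ⟨n-1, h1n⟩) b (e1 ⟨n-1, h1n⟩) = b
    exact Equiv.swap_apply_left _ _
  have hne : e1 ⟨n-1, h1n⟩ ≠ a := by
    rw [← he1]
    intro h
    have := e1.injective h
    have : n - 1 = 0 := congrArg Fin.val this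
    omega
  have he2a : e2 ⟨0, h0n⟩ = a := by
    show Equiv.swap (e1 ⟨n-1, h1n⟩) b (e1 ⟨0, h0n⟩) = a
    rw [he1]
    exact Equiv.swap_apply_of_ne_of_ne (fun h => hne h.symm) (fun h => hab h)
  have hxfval : ∀ (k : ℕ) (h : k < n),
      (fun k => if h : k < n then e2 ⟨k, h⟩ else a) k = e2 ⟨k, h⟩ :=
    fun k h => dif_pos h
  refine ⟨fun k => if h : k < n then e2 ⟨k, h⟩ else a, ?_, ?_, ?_, ?_, ?_⟩
  · rw [hxfval 0 h0n]; exact he2a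
  · rw [hxfval (Fintype.card V - 1) (hn ▸ h1n)]
    convert he2b using 2
  · intro k hk
    rw [hxfval k (by omega), hxfval (k+1) (by rw [← hn] at hk; omega)]
    refine hc _ _ ?_
    intro h
    have := e2.injective h
    have : k = k + 1 := congrArg Fin.val this
    omega
  · intro k l hk hl h
    rw [hxfval k (hn ▸ hk), hxfval l (hn ▸ hl)] at h
    have := e2.injective h
    exact congrArg Fin.val this
  · intro w
    refine ⟨(e2.symm w).1, hn ▸ (e2.symm w).2, ?_⟩
    rw [hxfval (e2.symm w).1 (e2.symm w).2]
    show e2 ⟨(e2.symm w).1, _⟩ = w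
    rw [Fin.eta]
    exact e2.apply_symm_apply w

lemma gdeg_mono [Fintype V] {G H : SimpleGraph V} (h : ∀ x y, G.Adj x y → H.Adj x y)
    (u : V) : gdeg G u ≤ gdeg H u :=
  Set.ncard_le_ncard (fun w hw => h u w hw) (Set.toFinite _)

lemma key [Fintype V] (m : ℕ) : ∀ G : SimpleGraph V,
    (Finset.univ.filter (fun pr : V × V => pr.1 ≠ pr.2 ∧ ¬ G.Adj pr.1 pr.2)).card ≤ m →
    (∀ u v : V, u ≠ v → ¬ G.Adj u v → Fintype.card V + 1 ≤ gdeg G u + gdeg G v) →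
    ∀ a b : V, a ≠ b → ∃ x, IsHP G a b x := by
  induction m with
  | zero =>
    intro G hcard _ a b hab
    refine complete_case G (fun u v huv => ?_) a b hab
    by_contra hna
    have : (u, v) ∈ Finset.univ.filter
        (fun pr : V × V => pr.1 ≠ pr.2 ∧ ¬ G.Adj pr.1 pr.2) := by
      simp [huv, hna]
    have := Finset.card_pos.2 ⟨_, this⟩
    omega
  | succ m ih =>
    intro G hcard hdeg a b hab
    by_cases hc : ∀ u v : V, u ≠ v → G.Adj u v
    · exact complete_case G hc a b hab
    · push_neg at hc
      obtain ⟨u, v, huv, hna⟩ := hc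
      set G' := addE G u v with hG'
      have hle : ∀ x y, G.Adj x y → G'.Adj x y := fun x y h => adj_addE G u v h
      have hGuv : G'.Adj u v := ⟨huv, Or.inr (Or.inl ⟨rfl, rfl⟩)⟩
      have hss : (Finset.univ.filter (fun pr : V × V => pr.1 ≠ pr.2 ∧ ¬ G'.Adj pr.1 pr.2))
          ⊂ (Finset.univ.filter (fun pr : V × V => pr.1 ≠ pr.2 ∧ ¬ G.Adj pr.1 pr.2)) := by
        refine Finset.ssubset_iff_of_subset ?_ |>.2 ⟨(u, v), by simp [huv, hna], by simp [hGuv]⟩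
        intro pr hpr
        simp only [Finset.mem_filter, Finset.mem_univ, true_and] at hpr ⊢
        exact ⟨hpr.1, fun h => hpr.2 (hle _ _ h)⟩
      have hcard' : (Finset.univ.filter
          (fun pr : V × V => pr.1 ≠ pr.2 ∧ ¬ G'.Adj pr.1 pr.2)).card ≤ m := by
        have := Finset.card_lt_card hss
        omega
      have hdeg' : ∀ u' v' : V, u' ≠ v' → ¬ G'.Adj u' v' →
          Fintype.card V + 1 ≤ gdeg G' u' + gdeg G' v' := by
        intro u' v' h1 h2
        have h3 : ¬ G.Adj u' v' := fun h => h2 (hle _ _ h)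
        have := hdeg u' v' h1 h3
        have m1 := gdeg_mono hle u'
        have m2 := gdeg_mono hle v'
        omega
      obtain ⟨x, hx⟩ := ih G' hcard' hdeg' a b hab
      exact closureE G u v huv hna (hdeg u v huv hna) a b x hx

lemma walk_of_fn (G : SimpleGraph V) (x : ℕ → V) :
    ∀ m : ℕ, (∀ k, k < m → G.Adj (x k) (x (k+1))) →
    ∃ w : G.Walk (x 0) (x m), w.support = (List.range (m+1)).map x := by
  intro m
  induction m with
  | zero => exact fun _ => ⟨SimpleGraph.Walk.nil, by simp [List.range_succ]⟩
  | succ m ih =>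
    intro h
    obtain ⟨w, hw⟩ := ih (fun k hk => h k (by omega))
    refine ⟨w.concat (h m (by omega)), ?_⟩
    rw [SimpleGraph.Walk.support_concat, hw]
    simp [List.range_succ]

end Aux

/-- **Ore-type condition (Lemma 2.1).** If `G` is a 2-connected graph of order `n` and
`d(u) + d(v) ≥ n + 1` for every pair of distinct nonadjacent vertices `u, v`, then `G` is
Hamilton-connected. -/
theorem ore_hamilton_connected {V : Type*} [Fintype V] (G : SimpleGraph V)
    (h2 : TwoConnected G)
    (hdeg : ∀ u v : V, u ≠ v → ¬ G.Adj u v →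
      Fintype.card V + 1 ≤ gdeg G u + gdeg G v) :
    HamConnected G := by
  intro u v huv
  obtain ⟨x, h0, h1, hadj, hinj, hsurj⟩ := key _ G le_rfl hdeg u v huv
  have hn2 : 2 ≤ Fintype.card V := Fintype.one_lt_card_iff_nontrivial.2 ⟨u, v, huv⟩
  have hcard : Fintype.card V - 1 + 1 = Fintype.card V := by omega
  obtain ⟨w, hw⟩ := walk_of_fn G x (Fintype.card V - 1) (fun k hk => hadj k (by omega))
  refine ⟨w.copy h0 h1, ?_⟩
  have hsupp : (w.copy h0 h1).support = (List.range (Fintype.card V)).map x := by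
    rw [SimpleGraph.Walk.support_copy, hw, hcard]
  refine SimpleGraph.Walk.IsPath.isHamiltonian_of_mem ?_ ?_
  · refine SimpleGraph.Walk.IsPath.mk' ?_
    rw [hsupp]
    refine List.Nodup.map_on ?_ List.nodup_range
    intro k hk l hl he
    exact hinj k l (List.mem_range.1 hk) (List.mem_range.1 hl) he
  · intro z
    rw [hsupp]
    obtain ⟨k, hk, hxk⟩ := hsurj z
    exact List.mem_map.2 ⟨k, List.mem_range.2 hk, hxk⟩

end
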